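/- Let U be a random variable with 0 ≤ U ≤ 1 almost surely, and set β_j = E[U^j] for j = 1, 2, 3. Then −2β₁² + β₁β₂ + 2β₂ − β₃ = E[(1 − U)(U − β₁)²] + (1 − β₁)(β₂ − β₁²), and consequently −2β₁² + β₁β₂ + 2β₂ − β₃ ≥ 0. -/

import Mathlib

open MeasureTheory

/-- For a random variable `U ∈ [0,1]` a.s. with moments `β_j = E[U^j]`,
`-2β₁² + β₁β₂ + 2β₂ - β₃ = E[(1-U)(U-β₁)²] + (1-β₁)(β₂-β₁²) ≥ 0`. -/
theorem stmt_9 {Ω : Type*} [MeasurableSpace Ω] (P : Measure Ω) [IsProbabilityMeasure P]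
    (U : Ω → ℝ) (hU : Measurable U) (hb : ∀ᵐ ω ∂P, U ω ∈ Set.Icc (0 : ℝ) 1)
    (β₁ β₂ β₃ : ℝ)
    (h1 : β₁ = ∫ ω, U ω ∂P) (h2 : β₂ = ∫ ω, (U ω) ^ 2 ∂P)
    (h3 : β₃ = ∫ ω, (U ω) ^ 3 ∂P) :
    -2 * β₁ ^ 2 + β₁ * β₂ + 2 * β₂ - β₃ =
        (∫ ω, (1 - U ω) * (U ω - β₁) ^ 2 ∂P) + (1 - β₁) * (β₂ - β₁ ^ 2) ∧
      0 ≤ -2 * β₁ ^ 2 + β₁ * β₂ + 2 * β₂ - β₃ := by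
  have hbound : ∀ n : ℕ, ∀ᵐ ω ∂P, ‖(U ω) ^ n‖ ≤ 1 := by
    intro n
    filter_upwards [hb] with ω hω
    rw [Real.norm_eq_abs, abs_pow]
    exact pow_le_one₀ (abs_nonneg _) (abs_le.2 ⟨by linarith [hω.1], hω.2⟩)
  have hint : ∀ n : ℕ, Integrable (fun ω => (U ω) ^ n) P := by
    intro n
    exact (integrable_const (1 : ℝ)).mono' ((hU.pow_const n).aestronglyMeasurable)
      (hbound n)
  have intU : Integrable U P := by simpa using hint 1
  have intU2 : Integrable (fun ω => (U ω) ^ 2) P := hint 2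
  have intU3 : Integrable (fun ω => (U ω) ^ 3) P := hint 3
  -- key expansion
  have key : (∫ ω, (1 - U ω) * (U ω - β₁) ^ 2 ∂P)
      = β₂ - β₁ ^ 2 - β₃ + 2 * β₁ * β₂ - β₁ ^ 3 := by
    have hfun : (fun ω => (1 - U ω) * (U ω - β₁) ^ 2)
        = fun ω => ((1 + 2 * β₁) * (U ω) ^ 2 - (U ω) ^ 3
            - (2 * β₁ + β₁ ^ 2) * U ω + β₁ ^ 2) := by
      funext ω; ring
    have iA : Integrable (fun ω => (1 + 2 * β₁) * (U ω) ^ 2 - (U ω) ^ 3) P :=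
      (intU2.const_mul _).sub intU3
    have iB : Integrable (fun ω => (1 + 2 * β₁) * (U ω) ^ 2 - (U ω) ^ 3
        - (2 * β₁ + β₁ ^ 2) * U ω) P := iA.sub (intU.const_mul _)
    rw [hfun]
    rw [integral_add iB (integrable_const _)]
    rw [integral_sub iA (intU.const_mul _)]
    rw [integral_sub (intU2.const_mul _) intU3]
    rw [integral_const_mul, integral_const_mul, integral_const]
    simp only [measure_univ, probReal_univ, ENNReal.toReal_one, smul_eq_mul, one_mul]
    rw [← h1, ← h2, ← h3]
    ring
  have hβ1le : β₁ ≤ 1 := by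
    rw [h1]
    calc ∫ ω, U ω ∂P ≤ ∫ _ω, (1 : ℝ) ∂P := by
          apply integral_mono_ae intU (integrable_const 1)
          filter_upwards [hb] with ω hω using hω.2
      _ = 1 := by simp
  have hvar : 0 ≤ β₂ - β₁ ^ 2 := by
    have : β₂ - β₁ ^ 2 = ∫ ω, (U ω - β₁) ^ 2 ∂P := by
      have hfun : (fun ω => (U ω - β₁) ^ 2)
          = fun ω => ((U ω) ^ 2 - (2 * β₁) * U ω + β₁ ^ 2) := by
        funext ω; ring
      have iC : Integrable (fun ω => (U ω) ^ 2 - 2 * β₁ * U ω) P :=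
        intU2.sub (intU.const_mul _)
      rw [hfun, integral_add iC (integrable_const _),
        integral_sub intU2 (intU.const_mul _), integral_const_mul, integral_const]
      simp only [measure_univ, probReal_univ, ENNReal.toReal_one, smul_eq_mul, one_mul]
      rw [← h1, ← h2]; ring
    rw [this]
    exact integral_nonneg fun ω => sq_nonneg _
  have hIpos : 0 ≤ ∫ ω, (1 - U ω) * (U ω - β₁) ^ 2 ∂P := by
    apply integral_nonneg_of_ae
    filter_upwards [hb] with ω hω
    exact mul_nonneg (by linarith [hω.2]) (sq_nonneg _)
  constructor
  · rw [key]; ring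
  · have := mul_nonneg (by linarith : (0:ℝ) ≤ 1 - β₁) hvar
    nlinarith [hIpos, key]
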